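/- Let A, v, σ, C, U₁, V₁, V₀, C₁ be real numbers with v ≠ 0, σ ≠ 0 and C₁ ≠ 0, and define u(ξ) = U₁ tanh(C₁ξ) + V₁ / cosh(C₁ξ) + V₀. If u satisfies (A − v)·u(ξ) − (v² σ / 2)·u'(ξ) = C for every real ξ, then V₁ = 0; that is, the bell-profile (sech) component of the travelling-wave ansatz must vanish. -/

import Mathlib

open Real

theorem stmt_15 (A v σ C U₁ V₁ V₀ C₁ : ℝ)
    (hv : v ≠ 0) (hσ : σ ≠ 0) (hC₁ : C₁ ≠ 0)
    (u : ℝ → ℝ)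
    (hu : ∀ ξ : ℝ, u ξ = U₁ * Real.tanh (C₁ * ξ) + V₁ / Real.cosh (C₁ * ξ) + V₀)
    (hode : ∀ ξ : ℝ, (A - v) * u ξ - v ^ 2 * σ / 2 * deriv u ξ = C) :
    V₁ = 0 := by
  have hc : ∀ x : ℝ, Real.cosh x ≠ 0 := fun x => (Real.cosh_pos x).ne'
  have hueq : u = fun ξ => (U₁ * Real.sinh (C₁ * ξ) + V₁) / Real.cosh (C₁ * ξ) + V₀ := by
    funext ξ
    rw [hu ξ, Real.tanh_eq_sinh_div_cosh]
    field_simp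
  have hder : ∀ ξ : ℝ, deriv u ξ =
      C₁ * (U₁ - V₁ * Real.sinh (C₁ * ξ)) / Real.cosh (C₁ * ξ) ^ 2 := by
    intro ξ
    have h1 : HasDerivAt (fun ξ : ℝ => C₁ * ξ) C₁ ξ := by
      simpa using (hasDerivAt_id ξ).const_mul C₁
    have hs : HasDerivAt (fun ξ : ℝ => Real.sinh (C₁ * ξ)) (Real.cosh (C₁ * ξ) * C₁) ξ :=
      (Real.hasDerivAt_sinh _).comp ξ h1
    have hch : HasDerivAt (fun ξ : ℝ => Real.cosh (C₁ * ξ)) (Real.sinh (C₁ * ξ) * C₁) ξ :=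
      (Real.hasDerivAt_cosh _).comp ξ h1
    have hnum : HasDerivAt (fun ξ : ℝ => U₁ * Real.sinh (C₁ * ξ) + V₁)
        (U₁ * (Real.cosh (C₁ * ξ) * C₁)) ξ := (hs.const_mul U₁).add_const V₁
    have hdiv := (hnum.div hch (hc _)).add_const V₀
    rw [hueq]
    refine hdiv.deriv.trans ?_
    have hpy := Real.cosh_sq_sub_sinh_sq (C₁ * ξ)
    field_simp
    linear_combination U₁ * hpy
  set k := v ^ 2 * σ / 2 with hk
  have hkne : k ≠ 0 := by
    simp only [hk]
    positivity
  have P : ∀ t : ℝ, (A - v) * ((U₁ * Real.sinh t + V₁) / Real.cosh t + V₀)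
      - k * (C₁ * (U₁ - V₁ * Real.sinh t) / Real.cosh t ^ 2) = C := by
    intro t
    have := hode (t / C₁)
    rw [hder, hueq] at this
    simpa [mul_div_cancel₀ _ hC₁] using this
  -- Q t: (A - v) * U₁ * cosh t + k * C₁ * V₁ = 0 for t > 0
  have Q : ∀ t : ℝ, 0 < t → (A - v) * U₁ * Real.cosh t + k * C₁ * V₁ = 0 := by
    intro t ht
    have h1 := P t
    have h2 := P (-t)
    rw [Real.sinh_neg, Real.cosh_neg] at h2
    have hsub : (A - v) * (2 * U₁ * Real.sinh t) / Real.cosh t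
        + k * (C₁ * (2 * V₁ * Real.sinh t) / Real.cosh t ^ 2) = 0 := by
      have := sub_eq_zero.mpr (h1.trans h2.symm)
      field_simp at this ⊢
      nlinarith [this]
    have hsne : Real.sinh t ≠ 0 := by
      have := Real.sinh_pos_iff.mpr ht; linarith
    have hcne := hc t
    field_simp at hsub
    have h4 : ((A - v) * U₁ * Real.cosh t + k * C₁ * V₁) * (2 * Real.sinh t * Real.cosh t) = 0 := by
      linear_combination Real.cosh t * hsub
    rcases mul_eq_zero.mp h4 with h | h
    · exact h
    · exfalso
      have : (2 : ℝ) * Real.sinh t * Real.cosh t ≠ 0 := by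
        apply mul_ne_zero (mul_ne_zero two_ne_zero hsne) hcne
      exact this h
  have Q1 := Q 1 one_pos
  have Q2 := Q 2 two_pos
  have hlt : Real.cosh 1 < Real.cosh 2 := by
    rw [Real.cosh_lt_cosh]
    rw [abs_of_pos one_pos, abs_of_pos two_pos]
    norm_num
  have hA : (A - v) * U₁ = 0 := by
    have := sub_eq_zero.mpr (Q1.trans Q2.symm)
    have h3 : (A - v) * U₁ * (Real.cosh 1 - Real.cosh 2) = 0 := by ring_nf; ring_nf at this; linarith
    rcases mul_eq_zero.mp h3 with h | h
    · exact h
    · exfalso; linarith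
  have : k * C₁ * V₁ = 0 := by
    rw [hA] at Q1; linarith [Q1]
  rcases mul_eq_zero.mp this with h | h
  · exact absurd (mul_eq_zero.mp h) (by push_neg; exact ⟨hkne, hC₁⟩)
  · exact h
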